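/- Let v be a complex number with Re(v) > −1/2 and let i ≥ 0 be an integer. Then there is a constant C, depending only on v and i, such that for all real x with 0 < x ≤ 10 one has |x^i · (d/dx)^i J_v(x)| ≤ C · x^{Re(v)}. -/

import Mathlib

open scoped BigOperators
/-- Bessel function of the first kind `J_v(x)` for `x > 0` and `Re v > -1/2`, defined by
the series `J_v(x) = ∑_{m≥0} ((−1)^m/(m!·Γ(m+v+1)))·(x/2)^{2m+v}` with
`(x/2)^w := exp(w·log(x/2))` (real logarithm). -/
noncomputable def besselJ (v : ℂ) (x : ℝ) : ℂ :=
  ∑' m : ℕ, ((-1) ^ m / ((m.factorial : ℂ) * Complex.Gamma ((m : ℂ) + v + 1))) *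
    Complex.exp ((2 * (m : ℂ) + v) * (Real.log (x / 2) : ℂ))

namespace BesselProof

open Complex Set Finset

/-- series coefficients -/
noncomputable def cc (v : ℂ) (m : ℕ) : ℂ :=
  (-1) ^ m / ((m.factorial : ℂ) * Complex.Gamma ((m : ℂ) + v + 1))

/-- power series coefficients of the even part -/
noncomputable def aa (v : ℂ) (n : ℕ) : ℂ :=
  if Even n then cc v (n / 2) * (2 : ℂ)⁻¹ ^ n else 0

lemma re_pos_aux {v : ℂ} (hv : -1/2 < v.re) (m : ℕ) : 0 < ((m : ℂ) + v + 1).re := by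
  have : (0:ℝ) ≤ (m:ℝ) := Nat.cast_nonneg m
  simp only [Complex.add_re, Complex.natCast_re, Complex.one_re]
  linarith

lemma gamma_lb {v : ℂ} (hv : -1/2 < v.re) (m : ℕ) :
    (m.factorial : ℝ) / 2 ^ m * ‖Complex.Gamma (v + 1)‖ ≤ ‖Complex.Gamma ((m : ℂ) + v + 1)‖ := by
  induction m with
  | zero => simp
  | succ m ih =>
    have hz : ((m : ℂ) + v + 1) ≠ 0 := by
      intro h
      have := re_pos_aux hv m
      rw [h] at this; simp at this
    have key : Complex.Gamma (((m + 1 : ℕ) : ℂ) + v + 1)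
        = ((m : ℂ) + v + 1) * Complex.Gamma ((m : ℂ) + v + 1) := by
      push_cast
      rw [show (m : ℂ) + 1 + v + 1 = ((m : ℂ) + v + 1) + 1 by ring]
      exact Complex.Gamma_add_one _ hz
    rw [key, norm_mul]
    have h1 : ((m : ℝ) + 1) / 2 ≤ ‖(m : ℂ) + v + 1‖ := by
      have h2 : ((m : ℂ) + v + 1).re ≤ ‖(m : ℂ) + v + 1‖ := Complex.re_le_norm _
      have hre : ((m : ℂ) + v + 1).re = (m : ℝ) + v.re + 1 := by simp
      rw [hre] at h2
      linarith
    have hA : (0:ℝ) ≤ (m.factorial : ℝ) / 2 ^ m * ‖Complex.Gamma (v + 1)‖ := by positivity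
    have hN : (0:ℝ) ≤ ((m : ℝ) + 1) / 2 := by positivity
    calc ((m + 1).factorial : ℝ) / 2 ^ (m + 1) * ‖Complex.Gamma (v + 1)‖
        = (((m : ℝ) + 1) / 2) * ((m.factorial : ℝ) / 2 ^ m * ‖Complex.Gamma (v + 1)‖) := by
          rw [Nat.factorial_succ]; push_cast; ring
      _ ≤ ‖(m : ℂ) + v + 1‖ * ‖Complex.Gamma ((m : ℂ) + v + 1)‖ :=
          mul_le_mul h1 ih hA (le_trans hN h1)

lemma gamma_pos {v : ℂ} (hv : -1/2 < v.re) : 0 < ‖Complex.Gamma (v + 1)‖ := by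
  have : (0:ℝ) < (v + 1).re := by simp [Complex.add_re]; linarith
  exact norm_pos_iff.mpr (Complex.Gamma_ne_zero_of_re_pos this)

lemma norm_cc_le {v : ℂ} (hv : -1/2 < v.re) (m : ℕ) :
    ‖cc v m‖ ≤ ‖Complex.Gamma (v + 1)‖⁻¹ * 2 ^ m / (m.factorial : ℝ) ^ 2 := by
  have hG := gamma_pos hv
  have hfac : (1:ℝ) ≤ (m.factorial : ℝ) := by exact_mod_cast m.factorial_pos
  have hlb := gamma_lb hv m
  have hΓpos : (0:ℝ) < ‖Complex.Gamma ((m : ℂ) + v + 1)‖ := by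
    have : (0:ℝ) < (m.factorial : ℝ) / 2 ^ m * ‖Complex.Gamma (v + 1)‖ := by positivity
    linarith
  have hnorm : ‖cc v m‖ = 1 / ((m.factorial : ℝ) * ‖Complex.Gamma ((m : ℂ) + v + 1)‖) := by
    rw [cc, norm_div, norm_pow, norm_neg, norm_one, one_pow, norm_mul, Complex.norm_natCast]
  rw [hnorm, div_le_div_iff₀ (by positivity) (by positivity)]
  calc (1:ℝ) * (m.factorial : ℝ) ^ 2 = (m.factorial : ℝ) ^ 2 := one_mul _
    _ = (‖Complex.Gamma (v + 1)‖⁻¹ * 2 ^ m) *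
        ((m.factorial : ℝ) * ((m.factorial : ℝ) / 2 ^ m * ‖Complex.Gamma (v + 1)‖)) := by
        have hGne : ‖Complex.Gamma (v + 1)‖ ≠ 0 := ne_of_gt hG
        set a := ‖Complex.Gamma (v + 1)‖ with ha
        field_simp
    _ ≤ (‖Complex.Gamma (v + 1)‖⁻¹ * 2 ^ m) *
        ((m.factorial : ℝ) * ‖Complex.Gamma ((m : ℂ) + v + 1)‖) := by
        gcongr

lemma summable_main {v : ℂ} (hv : -1/2 < v.re) (t : ℝ) (ht : 0 ≤ t) :
    Summable (fun m : ℕ => ‖cc v m‖ * t ^ m) := by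
  have hG := gamma_pos hv
  refine Summable.of_nonneg_of_le (fun m => by positivity)
    (fun m => ?_) ((Real.summable_pow_div_factorial (2 * t)).mul_left
      ‖Complex.Gamma (v + 1)‖⁻¹)
  have hfac : (1:ℝ) ≤ (m.factorial : ℝ) := by exact_mod_cast m.factorial_pos
  calc ‖cc v m‖ * t ^ m
      ≤ (‖Complex.Gamma (v + 1)‖⁻¹ * 2 ^ m / (m.factorial : ℝ) ^ 2) * t ^ m := by
        gcongr
        exact norm_cc_le hv m
    _ ≤ (‖Complex.Gamma (v + 1)‖⁻¹ * 2 ^ m / (m.factorial : ℝ)) * t ^ m := by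
        have h1 : (m.factorial : ℝ) ≤ (m.factorial : ℝ) ^ 2 := by nlinarith
        gcongr
    _ = ‖Complex.Gamma (v + 1)‖⁻¹ * ((2 * t) ^ m / (m.factorial : ℝ)) := by
        rw [mul_pow]; ring

lemma not_even_aa {v : ℂ} {n : ℕ} (h : ¬ Even n) : aa v n = 0 := by simp [aa, h]

lemma aa_two_mul (v : ℂ) (m : ℕ) : aa v (2 * m) = cc v m * (2 : ℂ)⁻¹ ^ (2 * m) := by
  have h : Even (2 * m) := ⟨m, by ring⟩
  simp [aa, h]

lemma radius_top {v : ℂ} (hv : -1/2 < v.re) :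
    (FormalMultilinearSeries.ofScalars ℂ (aa v)).radius = ⊤ := by
  apply FormalMultilinearSeries.radius_eq_top_of_summable_norm
  intro r
  simp_rw [FormalMultilinearSeries.ofScalars_norm]
  have hinj : Function.Injective (fun m : ℕ => 2 * m) := fun a b h => by dsimp only at h; omega
  refine (hinj.summable_iff ?_).mp ?_
  · intro n hn
    have hne : ¬ Even n := by
      rintro ⟨k, rfl⟩; exact hn ⟨k, by ring⟩
    simp [not_even_aa (v := v) hne]
  · refine (summable_main hv (((r : ℝ) / 2) ^ 2) (by positivity)).congr fun m => ?_
    simp only [Function.comp]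
    rw [aa_two_mul, norm_mul, norm_pow, norm_inv, Complex.norm_ofNat, ← pow_mul, div_pow]
    field_simp
    rw [mul_assoc, ← mul_pow]; norm_num

/-- the entire even part -/
noncomputable def G (v : ℂ) : ℂ → ℂ := (FormalMultilinearSeries.ofScalars ℂ (aa v)).sum

lemma contDiff_G {v : ℂ} (hv : -1/2 < v.re) : ContDiff ℂ (⊤ : ℕ∞) (G v) := by
  have h := (FormalMultilinearSeries.ofScalars ℂ (aa v)).hasFPowerSeriesOnBall
    (by rw [radius_top hv]; exact ENNReal.zero_lt_top)
  have han := h.analyticOnNhd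
  rw [contDiff_iff_contDiffAt]
  intro z
  refine (han z ?_).contDiffAt
  rw [radius_top hv]
  exact EMetric.mem_ball.mpr (edist_lt_top _ _)

lemma G_eq (v : ℂ) (z : ℂ) : G v z = ∑' n : ℕ, aa v n • z ^ n :=
  tsum_congr fun n => FormalMultilinearSeries.ofScalars_apply_eq _ _ _

/-- the singular factor -/
noncomputable def E (v : ℂ) : ℝ → ℂ := fun y => Complex.exp (v * (Real.log (y / 2) : ℂ))

lemma besselJ_eq {v : ℂ} (x : ℝ) (hx : 0 < x) :
    besselJ v x = E v x * G v (x : ℂ) := by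
  have hx2 : (0:ℝ) < x / 2 := by linarith
  have hterm : ∀ m : ℕ,
      ((-1) ^ m / ((m.factorial : ℂ) * Complex.Gamma ((m : ℂ) + v + 1))) *
        Complex.exp ((2 * (m : ℂ) + v) * (Real.log (x / 2) : ℂ))
      = (aa v (2 * m) • ((x : ℂ)) ^ (2 * m)) * E v x := by
    intro m
    have h1 : (2 * (m : ℂ) + v) * (Real.log (x / 2) : ℂ)
        = ((2 * m : ℕ) : ℂ) * (Real.log (x / 2) : ℂ) + v * (Real.log (x / 2) : ℂ) := by
      push_cast; ring
    rw [h1, Complex.exp_add, Complex.exp_nat_mul]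
    have h2 : Complex.exp ((Real.log (x / 2) : ℂ)) = ((x : ℂ) / 2) := by
      rw [← Complex.ofReal_exp, Real.exp_log hx2]
      push_cast; ring
    rw [h2, aa_two_mul]
    rw [smul_eq_mul, E, cc]
    rw [show ((x : ℂ) / 2) = (x : ℂ) * (2:ℂ)⁻¹ by ring, mul_pow]
    ring
  rw [besselJ, tsum_congr hterm, tsum_mul_right]
  have hinj : Function.Injective (fun m : ℕ => 2 * m) := fun a b h => by dsimp only at h; omega
  have hre : (∑' m : ℕ, aa v (2 * m) • ((x : ℂ)) ^ (2 * m))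
      = ∑' n : ℕ, aa v n • ((x : ℂ)) ^ n := by
    refine hinj.tsum_eq (f := fun n => aa v n • ((x : ℂ)) ^ n) ?_
    intro n hn
    rcases Nat.even_or_odd n with ⟨k, hk⟩ | ho
    · exact ⟨k, by dsimp only; omega⟩
    · exact absurd (show (fun n => aa v n • ((x : ℂ)) ^ n) n = 0 by
        simp [not_even_aa (v := v) (Nat.not_even_iff_odd.mpr ho)]) hn
  rw [hre, ← G_eq]
  ring

lemma hasDerivAt_E (v : ℂ) {x : ℝ} (hx : 0 < x) :
    HasDerivAt (E v) (v * (x : ℂ)⁻¹ * E v x) x := by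
  have hx2 : (x : ℝ) / 2 ≠ 0 := by positivity
  have h0 : HasDerivAt (fun y : ℝ => y / 2) (1 / 2 : ℝ) x := by
    simpa using (hasDerivAt_id x).div_const 2
  have h1 : HasDerivAt (fun y : ℝ => Real.log (y / 2)) x⁻¹ x := by
    have := (Real.hasDerivAt_log hx2).comp x h0
    refine this.congr_deriv ?_
    field_simp
  have h4 := ((h1.ofReal_comp).const_mul v).cexp
  refine h4.congr_deriv ?_
  simp only [E, Complex.ofReal_inv]
  ring

lemma contDiffOn_E (v : ℂ) : ContDiffOn ℝ (⊤ : ℕ∞) (E v) (Ioi (0:ℝ)) := by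
  intro x hx
  have hx0 : (0:ℝ) < x := hx
  have c1 : ContDiffAt ℝ (⊤ : ℕ∞) (fun y : ℝ => Real.log (y / 2)) x :=
    (Real.contDiffAt_log.2 (by positivity)).comp x (contDiffAt_id.div_const _)
  have c2 : ContDiffAt ℝ (⊤ : ℕ∞) (fun y : ℝ => ((Real.log (y / 2) : ℝ) : ℂ)) x :=
    Complex.ofRealCLM.contDiff.contDiffAt.comp x c1
  have c3 : ContDiffAt ℝ (⊤ : ℕ∞) (fun y : ℝ => v * ((Real.log (y / 2) : ℝ) : ℂ)) x :=
    contDiffAt_const.mul c2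
  have c4 : ContDiffAt ℝ (⊤ : ℕ∞) (E v) x :=
    ((Complex.contDiff_exp (𝕜 := ℝ)).contDiffAt.comp x c3)
  exact c4.contDiffWithinAt

lemma iter_E (v : ℂ) (j : ℕ) : ∀ x ∈ Ioi (0:ℝ),
    iteratedDerivWithin j (E v) (Ioi 0) x
      = (∏ k ∈ Finset.range j, (v - k)) * (x : ℂ) ^ (-(j : ℤ)) * E v x := by
  induction j with
  | zero => intro x hx; simp
  | succ j ih =>
    intro x hx
    have hx0 : (0:ℝ) < x := hx
    have hu : UniqueDiffWithinAt ℝ (Ioi (0:ℝ)) x := (uniqueDiffOn_Ioi 0) x hx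
    rw [iteratedDerivWithin_succ]
    rw [derivWithin_congr (fun y hy => ih y hy) (ih x hx)]
    rw [derivWithin_of_isOpen isOpen_Ioi hx]
    have hxC : (x : ℂ) ≠ 0 := by exact_mod_cast hx0.ne'
    have h1 := (hasDerivAt_zpow (-(j : ℤ)) (x : ℂ) (Or.inl hxC)).comp_ofReal
    have hE := hasDerivAt_E v hx0
    have H := (h1.const_mul (∏ k ∈ Finset.range j, (v - k))).mul hE
    rw [HasDerivAt.deriv (f := fun y : ℝ => (∏ k ∈ Finset.range j, (v - k)) * (y : ℂ) ^ (-(j : ℤ)) * E v y) H, Finset.prod_range_succ]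
    have e1 : (x : ℂ) ^ (-(j : ℤ) - 1) = (x : ℂ) ^ (-(j : ℤ)) * (x : ℂ)⁻¹ := by
      rw [sub_eq_add_neg, zpow_add₀ hxC, zpow_neg_one]
    have e2 : (-((j : ℕ) + 1 : ℕ) : ℤ) = -(j : ℤ) - 1 := by push_cast; ring
    rw [e2, e1]
    push_cast
    ring

/-- iterated derivatives within open sets -/
lemma iterWithin_of_isOpen {f : ℝ → ℂ} {s : Set ℝ} {x : ℝ} (n : ℕ) (hs : IsOpen s)
    (hx : x ∈ s) : iteratedDerivWithin n f s x = iteratedDeriv n f x := by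
  rw [iteratedDerivWithin_eq_iteratedFDerivWithin, iteratedDeriv_eq_iteratedFDeriv,
    iteratedFDerivWithin_of_isOpen n hs hx]

lemma norm_E (v : ℂ) {x : ℝ} (hx : 0 < x) : ‖E v x‖ = (x / 2) ^ v.re := by
  have hx2 : (0:ℝ) < x / 2 := by linarith
  rw [E, Complex.norm_exp]
  rw [Real.rpow_def_of_pos hx2]
  congr 1
  simp [Complex.mul_re]
  ring

end BesselProof

open BesselProof Set Finset in
/-- for `Re v > −1/2` and `i ≥ 0`, `x^i J_v^{(i)}(x) ≪_{v,i} x^{Re v}` for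
`0 < x ≤ 10`. -/
theorem besselJ_deriv_bound (v : ℂ) (hv : -1/2 < v.re) (i : ℕ) :
    ∃ C : ℝ, ∀ x : ℝ, 0 < x → x ≤ 10 →
      ‖(x : ℂ) ^ i * iteratedDeriv i (besselJ v) x‖ ≤ C * x ^ v.re := by
  classical
  set s : Set ℝ := Ioi (0:ℝ) with hs_def
  -- the restricted entire factor
  set g : ℝ → ℂ := fun y => G v (y : ℂ) with hg_def
  have hGsmooth : ContDiff ℝ (⊤ : ℕ∞) g :=
    ((contDiff_G hv).restrict_scalars ℝ).comp Complex.ofRealCLM.contDiff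
  -- bounds on derivatives of g on [0, 10]
  have hM : ∀ k : ℕ, ∃ Mk : ℝ, 0 ≤ Mk ∧ ∀ y ∈ Icc (0:ℝ) 10, ‖iteratedDeriv k g y‖ ≤ Mk := by
    intro k
    obtain ⟨Mk, hMk⟩ := (isCompact_Icc : IsCompact (Icc (0:ℝ) 10)).exists_bound_of_continuousOn
      ((hGsmooth.continuous_iteratedDeriv k (by exact_mod_cast le_top)).continuousOn)
    refine ⟨max Mk 0, le_max_right _ _, fun y hy => (hMk y hy).trans (le_max_left _ _)⟩
  choose M hM0 hMb using hM
  set d : ℕ → ℂ := fun j => ∏ k ∈ Finset.range j, (v - k) with hd_def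
  refine ⟨(∑ j ∈ Finset.range (i + 1),
      (i.choose j : ℝ) * ‖d j‖ * M (i - j) * 10 ^ (i - j)) / (2:ℝ) ^ v.re, ?_⟩
  intro x hx hx10
  have hxs : x ∈ s := hx
  have hopen : IsOpen s := isOpen_Ioi
  have hud : UniqueDiffOn ℝ s := uniqueDiffOn_Ioi 0
  have hEq : Set.EqOn (besselJ v) (fun y => E v y * g y) s := fun y hy => besselJ_eq y hy
  -- pass to within-derivatives
  have h1 : iteratedDeriv i (besselJ v) x = iteratedDerivWithin i (fun y => E v y * g y) s x := by
    rw [← iterWithin_of_isOpen i hopen hxs]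
    exact iteratedDerivWithin_congr hEq hxs
  -- Leibniz bound
  have hEcd : ContDiffOn ℝ ((⊤ : ℕ∞) : WithTop ℕ∞) (E v) s := contDiffOn_E v
  have hgcd : ContDiffOn ℝ ((⊤ : ℕ∞) : WithTop ℕ∞) g s := hGsmooth.contDiffOn
  have h2 : ‖iteratedDerivWithin i (fun y => E v y * g y) s x‖ ≤
      ∑ j ∈ Finset.range (i + 1), (i.choose j : ℝ) *
        ‖iteratedDerivWithin j (E v) s x‖ * ‖iteratedDerivWithin (i - j) g s x‖ := by
    rw [← norm_iteratedFDerivWithin_eq_norm_iteratedDerivWithin]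
    refine (norm_iteratedFDerivWithin_mul_le hEcd hgcd hud hxs (by exact_mod_cast le_top)).trans
      (le_of_eq ?_)
    refine Finset.sum_congr rfl fun j hj => ?_
    rw [norm_iteratedFDerivWithin_eq_norm_iteratedDerivWithin,
      norm_iteratedFDerivWithin_eq_norm_iteratedDerivWithin]
  -- norm of the E-factors
  have hEnorm : ∀ j : ℕ, ‖iteratedDerivWithin j (E v) s x‖
      = ‖d j‖ * (x ^ j)⁻¹ * (x / 2) ^ v.re := by
    intro j
    rw [iter_E v j x hxs, norm_mul, norm_mul, norm_zpow, norm_E v hx, Complex.norm_real,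
      Real.norm_of_nonneg hx.le, zpow_neg, zpow_natCast]
  have hgnorm : ∀ j : ℕ, ‖iteratedDerivWithin j g s x‖ ≤ M j := by
    intro j
    rw [iterWithin_of_isOpen j hopen hxs]
    exact hMb j x ⟨hx.le, hx10⟩
  have hxpos : (0:ℝ) < x ^ i := by positivity
  have h2pow : (0:ℝ) < (2:ℝ) ^ v.re := Real.rpow_pos_of_pos (by norm_num) _
  have hxv : (0:ℝ) < x ^ v.re := Real.rpow_pos_of_pos hx _
  calc ‖(x : ℂ) ^ i * iteratedDeriv i (besselJ v) x‖
      = x ^ i * ‖iteratedDerivWithin i (fun y => E v y * g y) s x‖ := by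
        rw [h1, norm_mul, norm_pow, Complex.norm_real, Real.norm_of_nonneg hx.le]
    _ ≤ x ^ i * ∑ j ∈ Finset.range (i + 1), (i.choose j : ℝ) *
        ‖iteratedDerivWithin j (E v) s x‖ * ‖iteratedDerivWithin (i - j) g s x‖ :=
        mul_le_mul_of_nonneg_left h2 hxpos.le
    _ ≤ x ^ i * ∑ j ∈ Finset.range (i + 1), (i.choose j : ℝ) *
        (‖d j‖ * (x ^ j)⁻¹ * (x / 2) ^ v.re) * M (i - j) := by
        refine mul_le_mul_of_nonneg_left (Finset.sum_le_sum fun j hj => ?_) hxpos.le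
        rw [hEnorm j]
        gcongr
        exact hgnorm (i - j)
    _ = ∑ j ∈ Finset.range (i + 1), (i.choose j : ℝ) * ‖d j‖ * M (i - j)
          * x ^ (i - j) * ((x / 2) ^ v.re) := by
        rw [Finset.mul_sum]
        refine Finset.sum_congr rfl fun j hj => ?_
        have hji : j ≤ i := by
          have := Finset.mem_range.mp hj; omega
        have hps : x ^ i * (x ^ j)⁻¹ = x ^ (i - j) := by
          rw [pow_sub₀ x hx.ne' hji]
        rw [← hps]
        ring
    _ ≤ ∑ j ∈ Finset.range (i + 1), (i.choose j : ℝ) * ‖d j‖ * M (i - j)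
          * 10 ^ (i - j) * ((x / 2) ^ v.re) := by
        gcongr with j hj
        exact mul_nonneg (mul_nonneg (Nat.cast_nonneg _) (norm_nonneg _)) (hM0 _)
    _ = (∑ j ∈ Finset.range (i + 1), (i.choose j : ℝ) * ‖d j‖ * M (i - j) * 10 ^ (i - j))
          / (2:ℝ) ^ v.re * x ^ v.re := by
        have hsplit : ((x:ℝ) / 2) ^ v.re = x ^ v.re / (2:ℝ) ^ v.re :=
          Real.div_rpow hx.le (by norm_num) v.re
        rw [← Finset.sum_mul, hsplit]
        field_simp
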